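/- Let G be a centerless group with automorphism tower ⟨G^α⟩, and suppose λ is a cardinal such that |G^α| ≤ λ for every ordinal α. Then the automorphism tower stabilizes and τ_G < λ⁺, where λ⁺ is the successor cardinal of λ. -/

import Mathlib

universe u

/-- The automorphism tower of a centerless group `G`: an ordinal-indexed increasing
continuous chain of groups, starting at `G`, where each successor stage is (identified
with) the automorphism group of the previous stage via the conjugation embedding. -/
structure AutTower (G : Type u) [Group G] where
  /-- the `o`-th stage `G^o` of the tower -/
  Stage : Ordinal.{u} → GrpCat.{u}
  /-- the inclusion maps of the tower -/
  map : ∀ ⦃o₁ o₂ : Ordinal.{u}⦄, o₁ ≤ o₂ → (↥(Stage o₁) →* ↥(Stage o₂))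
  map_id : ∀ (o : Ordinal.{u}) (x : ↥(Stage o)), map le_rfl x = x
  map_comp : ∀ ⦃o₁ o₂ o₃ : Ordinal.{u}⦄ (h₁ : o₁ ≤ o₂) (h₂ : o₂ ≤ o₃) (x : ↥(Stage o₁)),
      map h₂ (map h₁ x) = map (h₁.trans h₂) x
  map_injective : ∀ ⦃o₁ o₂ : Ordinal.{u}⦄ (h : o₁ ≤ o₂), Function.Injective (map h)
  /-- the identification of `G` with the `0`-th stage -/
  emb0 : G ≃* ↥(Stage 0)
  /-- the identification of the `(o+1)`-st stage with `Aut(G^o)` -/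
  succIso : ∀ o : Ordinal.{u}, ↥(Stage (o + 1)) ≃* MulAut ↥(Stage o)
  /-- under the above identification, the inclusion `G^o ≤ G^{o+1}` is `g ↦` conjugation by `g` -/
  succIso_map : ∀ (o : Ordinal.{u}) (x : ↥(Stage o)),
      succIso o (map (show o ≤ o + 1 from le_self_add) x) = MulAut.conj x
  /-- at limit stages the tower is continuous: `G^δ = ⋃_{α<δ} G^α` -/
  limit_covers : ∀ (o : Ordinal.{u}), Order.IsSuccLimit o → ∀ x : ↥(Stage o),
      ∃ (o' : Ordinal.{u}) (h : o' < o), x ∈ Set.range (map h.le)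

namespace AutTower

variable {G : Type u} [Group G]

/-- the embedding of `G` into the `o`-th stage of its automorphism tower -/
def embed (T : AutTower G) (o : Ordinal.{u}) : G →* ↥(T.Stage o) :=
  (T.map (show (0 : Ordinal.{u}) ≤ o from by simp)).comp T.emb0.toMonoidHom

/-- `G^{o+1} = G^o`, i.e. the inclusion of stage `o` into stage `o+1` is onto -/
def StabilizesAt (T : AutTower G) (o : Ordinal.{u}) : Prop :=
  Function.Surjective (T.map (show o ≤ o + 1 from le_self_add))

end AutTower

/-- If `G` is centerless and `λ` is a cardinal with `|G^α| ≤ λ` for every ordinal `α`,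
then the automorphism tower of `G` stabilizes and `τ_G < λ⁺`. -/
theorem autTower_stabilizes_below_succ {G : Type u} [Group G]
    (hG : Subgroup.center G = ⊥) (T : AutTower G) (lam : Cardinal.{u})
    (hbound : ∀ α : Ordinal.{u}, Cardinal.mk ↥(T.Stage α) ≤ lam) :
    ∃ α : Ordinal.{u}, α < (Order.succ lam).ord ∧ T.StabilizesAt α := by
  -- A general fact: if the map from stage α into some later stage β is surjective,
  -- and α + 1 ≤ β, then the tower stabilizes at α.
  have stab_of_surj : ∀ (α β : Ordinal.{u}) (h : α + 1 ≤ β),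
      Function.Surjective (T.map ((show α ≤ α + 1 from le_self_add).trans h)) → T.StabilizesAt α := by
    intro α β h hsurj y
    obtain ⟨x, hx⟩ := hsurj (T.map h y)
    refine ⟨x, T.map_injective h ?_⟩
    rw [T.map_comp (show α ≤ α + 1 from le_self_add) h x, hx]
  have card_le : ∀ (α : Ordinal.{u}) (n : ℕ), Cardinal.mk ↥(T.Stage α) ≤ n →
      Nat.card ↥(T.Stage α) ≤ n := by
    intro α n h
    have := Cardinal.toNat_le_toNat h (Cardinal.nat_lt_aleph0 n)
    simpa [Nat.card, Cardinal.toNat_natCast] using this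
  rcases lt_or_ge lam Cardinal.aleph0 with hfin | hinf
  · -- Finite case.
    obtain ⟨n, rfl⟩ := Cardinal.lt_aleph0.mp hfin
    have hord : (Order.succ (n : Cardinal.{u})).ord = ((n + 1 : ℕ) : Ordinal.{u}) := by
      rw [← Cardinal.nat_succ, Cardinal.ord_nat]
    have hfinite : ∀ α : Ordinal.{u}, Finite ↥(T.Stage α) := fun α =>
      Cardinal.lt_aleph0_iff_finite.mp (lt_of_le_of_lt (hbound α) hfin)
    by_contra hcon
    push_neg at hcon
    have key : ∀ k : ℕ, k ≤ n → k + 1 ≤ Nat.card ↥(T.Stage k) := by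
      intro k
      induction k with
      | zero =>
        intro _
        have := hfinite ((0 : ℕ) : Ordinal.{u})
        have : Nat.card ↥(T.Stage ((0 : ℕ) : Ordinal.{u})) ≠ 0 :=
          Nat.card_ne_zero.mpr ⟨⟨1⟩, this⟩
        omega
      | succ k ih =>
        intro hk
        have ihh := ih (by omega)
        have hklt : ((k : ℕ) : Ordinal.{u}) < (Order.succ (n : Cardinal.{u})).ord := by
          rw [hord]; exact_mod_cast Nat.lt_succ_of_le (by omega)
        have hns := hcon (k : Ordinal.{u}) hklt
        have hfk := hfinite ((k : ℕ) : Ordinal.{u})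
        have hfk1 := hfinite (((k : ℕ) : Ordinal.{u}) + 1)
        have hinj := T.map_injective (show ((k : ℕ) : Ordinal.{u}) ≤ ((k : ℕ) : Ordinal.{u}) + 1 from le_self_add)
        have hle : Nat.card ↥(T.Stage ((k : ℕ) : Ordinal.{u})) ≤
            Nat.card ↥(T.Stage (((k : ℕ) : Ordinal.{u}) + 1)) :=
          Nat.card_le_card_of_injective _ hinj
        have hne : Nat.card ↥(T.Stage ((k : ℕ) : Ordinal.{u})) ≠
            Nat.card ↥(T.Stage (((k : ℕ) : Ordinal.{u}) + 1)) := by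
          intro heq
          exact hns ((Nat.bijective_iff_injective_and_card _).mpr ⟨hinj, heq⟩).surjective
        have hcast : ((k + 1 : ℕ) : Ordinal.{u}) = ((k : ℕ) : Ordinal.{u}) + 1 := by
          push_cast; ring
        rw [hcast]
        omega
    have hcard := card_le ((n : ℕ) : Ordinal.{u}) n (hbound _)
    have := key n le_rfl
    omega
  · -- Infinite case.
    set δ : Ordinal.{u} := (Order.succ lam).ord with hδ
    have hreg : (Order.succ lam).IsRegular := Cardinal.isRegular_succ hinf
    have hlim : Order.IsSuccLimit δ := Cardinal.isSuccLimit_ord (hinf.trans (Order.le_succ lam))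
    choose f hf g hg using T.limit_covers δ hlim
    have hsup : (⨆ i, f i) < δ := by
      apply Ordinal.iSup_lt_ord _ hf
      rw [hreg.cof_eq]
      exact lt_of_le_of_lt (hbound δ) (Order.lt_succ lam)
    set α := ⨆ i, f i with hα
    have hα1 : α + 1 ≤ δ := by
      rw [Ordinal.add_one_eq_succ]
      exact (hlim.succ_lt hsup).le
    refine ⟨α, hsup, stab_of_surj α δ hα1 ?_⟩
    intro x
    refine ⟨T.map (Ordinal.le_iSup f x) (g x), ?_⟩
    rw [T.map_comp (Ordinal.le_iSup f x) ((show α ≤ α + 1 from le_self_add).trans hα1), hg x]
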